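/- Let (G,P) be a quasi-lattice ordered group and let μ be a finitely additive probability measure on (P,B_P) such that the family (μ(pP))_{p∈P} is summable. For p ∈ P set w_p = inf{μ(Ω) : Ω ∈ B_P, p ∈ Ω}. Then for every Ω ∈ B_P, the family (w_p)_{p∈Ω} is summable and ∑_{p∈Ω} w_p ≤ μ(Ω). -/
import Mathlib


/-- The order on `G` induced by the submonoid `P`: `g ≤ h` iff `g⁻¹ * h ∈ P`. -/
def QLe {G : Type*} [Group G] (P : Submonoid G) (g h : G) : Prop := g⁻¹ * h ∈ P

/-- `u` is the least upper bound of `g` and `h` with respect to `QLe P`. -/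
def QLub {G : Type*} [Group G] (P : Submonoid G) (g h u : G) : Prop :=
  QLe P g u ∧ QLe P h u ∧ ∀ v, QLe P g v → QLe P h v → QLe P u v

/-- `(G, P)` is a quasi-lattice ordered group. -/
structure QuasiLatticeOrdered {G : Type*} [Group G] (P : Submonoid G) : Prop where
  gen : Subgroup.closure (P : Set G) = ⊤
  cap : ∀ g ∈ P, g⁻¹ ∈ P → g = 1
  lub : ∀ g h : G, (∃ u, QLe P g u ∧ QLe P h u) → ∃ u, QLub P g h u

/-- Membership in the algebra `B_P` of subsets of `P` generated by the sets
`pP = {x | p⁻¹ x ∈ P}`, `p ∈ P`: the smallest collection of subsets containing the sets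
`pP` and closed under complements in `P`, finite unions and finite intersections. -/
inductive MemBP {G : Type*} [Group G] (P : Submonoid G) : Set G → Prop
  | basic (p : G) (hp : p ∈ P) : MemBP P {x | QLe P p x}
  | compl (Ω : Set G) : MemBP P Ω → MemBP P ((P : Set G) \ Ω)
  | union (Ω₁ Ω₂ : Set G) : MemBP P Ω₁ → MemBP P Ω₂ → MemBP P (Ω₁ ∪ Ω₂)
  | inter (Ω₁ Ω₂ : Set G) : MemBP P Ω₁ → MemBP P Ω₂ → MemBP P (Ω₁ ∩ Ω₂)

/-- For a finite set `J ⊆ P \ {e}`, `Ω_J = ⋂_{q ∈ J} (P \ qP)`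
(with the convention `Ω_∅ = P`). -/
def OmegaJ {G : Type*} [Group G] (P : Submonoid G) (J : Finset G) : Set G :=
  (P : Set G) ∩ ⋂ q ∈ J, {x | QLe P q x}ᶜ

/-- `w_p = inf { μ(Ω) : Ω ∈ B_P, p ∈ Ω }`. -/
noncomputable def wt {G : Type*} [Group G] (P : Submonoid G) (μ : Set G → ℝ) (p : G) : ℝ :=
  sInf {r : ℝ | ∃ Ω : Set G, MemBP P Ω ∧ p ∈ Ω ∧ μ Ω = r}



section Aux
variable {G : Type*} [Group G] {P : Submonoid G}

lemma qle_refl (p : G) : QLe P p p := by simp [QLe, one_mem]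

lemma qle_trans {a b c : G} (h1 : QLe P a b) (h2 : QLe P b c) : QLe P a c := by
  have := mul_mem h1 h2
  simpa [QLe, mul_assoc] using this

lemma qle_antisymm (hQL : QuasiLatticeOrdered P) {a b : G} (h1 : QLe P a b)
    (h2 : QLe P b a) : a = b := by
  have h2' : (a⁻¹ * b)⁻¹ ∈ P := by simpa [QLe, mul_inv_rev] using h2
  have := hQL.cap _ h1 h2'
  have : a * (a⁻¹ * b) = a * 1 := by rw [this]
  simpa using this.symm

lemma memBP_subset {Ω : Set G} (h : MemBP P Ω) : Ω ⊆ (P : Set G) := by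
  induction h with
  | basic p hp =>
      intro x hx
      have : p * (p⁻¹ * x) ∈ P := mul_mem hp hx
      simpa using this
  | compl Ω h ih => exact Set.diff_subset
  | union Ω₁ Ω₂ h1 h2 ih1 ih2 => exact Set.union_subset ih1 ih2
  | inter Ω₁ Ω₂ h1 h2 ih1 ih2 => exact Set.inter_subset_left.trans ih1

lemma memBP_P : MemBP P (P : Set G) := by
  have h1 : MemBP P {x | QLe P (1:G) x} := MemBP.basic 1 (one_mem P)
  have : {x | QLe P (1:G) x} = (P : Set G) := by ext x; simp [QLe]
  rwa [this] at h1

lemma memBP_diff {A B : Set G} (hA : MemBP P A) (hB : MemBP P B) : MemBP P (A \ B) := by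
  have h : A \ B = A ∩ ((P : Set G) \ B) := by
    ext x; constructor
    · intro hx; exact ⟨hx.1, memBP_subset hA hx.1, hx.2⟩
    · intro hx; exact ⟨hx.1, hx.2.2⟩
  rw [h]; exact MemBP.inter _ _ hA (MemBP.compl _ hB)

end Aux
section Main
variable {G : Type*} [Group G] {P : Submonoid G} {μ : Set G → ℝ}

lemma mu_mono (hpos : ∀ Ω : Set G, MemBP P Ω → 0 ≤ μ Ω)
    (hadd : ∀ Ω₁ Ω₂ : Set G, MemBP P Ω₁ → MemBP P Ω₂ → Disjoint Ω₁ Ω₂ →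
      μ (Ω₁ ∪ Ω₂) = μ Ω₁ + μ Ω₂)
    {A B : Set G} (hA : MemBP P A) (hB : MemBP P B) (hAB : A ⊆ B) : μ A ≤ μ B := by
  have hBA : MemBP P (B \ A) := memBP_diff hB hA
  have hU : A ∪ (B \ A) = B := Set.union_diff_cancel hAB
  have := hadd A (B \ A) hA hBA Set.disjoint_sdiff_right
  rw [hU] at this
  linarith [hpos _ hBA]

lemma sum_mu_le {ι : Type*} (hpos : ∀ Ω : Set G, MemBP P Ω → 0 ≤ μ Ω)
    (hadd : ∀ Ω₁ Ω₂ : Set G, MemBP P Ω₁ → MemBP P Ω₂ → Disjoint Ω₁ Ω₂ →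
      μ (Ω₁ ∪ Ω₂) = μ Ω₁ + μ Ω₂)
    (s : Finset ι) (A : ι → Set G) (Ω : Set G) (hΩ : MemBP P Ω)
    (hA : ∀ i ∈ s, MemBP P (A i)) (hsub : ∀ i ∈ s, A i ⊆ Ω)
    (hdis : ∀ i ∈ s, ∀ j ∈ s, i ≠ j → Disjoint (A i) (A j)) :
    ∑ i ∈ s, μ (A i) ≤ μ Ω := by
  classical
  induction s using Finset.induction_on generalizing Ω with
  | empty => simpa using hpos Ω hΩ
  | @insert a s ha ih =>
    have hmem : a ∈ insert a s := Finset.mem_insert_self a s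
    have hAa : MemBP P (A a) := hA a hmem
    have hΩA : MemBP P (Ω \ A a) := memBP_diff hΩ hAa
    have h1 : ∀ i ∈ s, A i ⊆ Ω \ A a := by
      intro i hi x hx
      have hd := hdis a hmem i (Finset.mem_insert_of_mem hi) (by rintro rfl; exact ha hi)
      exact ⟨hsub i (Finset.mem_insert_of_mem hi) hx,
        fun hxa => (Set.disjoint_left.mp hd) hxa hx⟩
    have h2 : ∑ i ∈ s, μ (A i) ≤ μ (Ω \ A a) :=
      ih (Ω \ A a) hΩA (fun i hi => hA i (Finset.mem_insert_of_mem hi)) h1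
        (fun i hi j hj hij =>
          hdis i (Finset.mem_insert_of_mem hi) j (Finset.mem_insert_of_mem hj) hij)
    rw [Finset.sum_insert ha]
    have hU : A a ∪ (Ω \ A a) = Ω := Set.union_diff_cancel (hsub a hmem)
    have := hadd (A a) (Ω \ A a) hAa hΩA Set.disjoint_sdiff_right
    rw [hU] at this
    linarith

open Classical in
/-- Separating set: `x ∈ pP` such that every `q ∈ F` with `q ≤ x` satisfies `q ≤ p`. -/
noncomputable def sepSet (P : Submonoid G) (F : Finset G) (p : G) : Set G :=
  {x | QLe P p x} ∩ ⋂ q ∈ F, (if QLe P q p then {x | QLe P p x} else (P : Set G) \ {x | QLe P q x})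

lemma memBP_sep (F : Finset G) {p : G} (hp : p ∈ P) (hF : ∀ q ∈ F, q ∈ P) :
    MemBP P (sepSet P F p) := by
  classical
  unfold sepSet
  induction F using Finset.induction_on with
  | empty => simpa using MemBP.basic p hp
  | @insert a s ha ih =>
    rw [Finset.set_biInter_insert, ← Set.inter_assoc, Set.inter_comm {x | QLe P p x}, Set.inter_assoc]
    refine MemBP.inter _ _ ?_ (ih (fun q hq => hF q (Finset.mem_insert_of_mem hq)))
    split
    · exact MemBP.basic p hp
    · exact MemBP.compl _ (MemBP.basic a (hF a (Finset.mem_insert_self a s)))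

lemma mem_sep (F : Finset G) {p : G} (hp : p ∈ P) : p ∈ sepSet P F p := by
  classical
  refine ⟨qle_refl p, ?_⟩
  simp only [Set.mem_iInter]
  intro q hq
  by_cases h : QLe P q p
  · rw [if_pos h]; exact qle_refl p
  · rw [if_neg h]; exact ⟨hp, h⟩

lemma sep_disjoint (hQL : QuasiLatticeOrdered P) (F : Finset G) {p q : G}
    (hp : p ∈ F) (hq : q ∈ F) (hpq : p ≠ q) :
    Disjoint (sepSet P F p) (sepSet P F q) := by
  classical
  rw [Set.disjoint_left]
  rintro x ⟨hxp, hxP⟩ ⟨hxq, hxQ⟩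
  simp only [Set.mem_iInter] at hxP hxQ
  have h1 : QLe P q p := by
    by_cases h : QLe P q p
    · exact h
    · have := hxP q hq; rw [if_neg h] at this; exact absurd hxq this.2
  have h2 : QLe P p q := by
    by_cases h : QLe P p q
    · exact h
    · have := hxQ p hp; rw [if_neg h] at this; exact absurd hxp this.2
  exact hpq (qle_antisymm hQL h2 h1)

lemma wt_nonneg (hpos : ∀ Ω : Set G, MemBP P Ω → 0 ≤ μ Ω) (p : G) : 0 ≤ wt P μ p :=
  Real.sInf_nonneg (by rintro r ⟨Ω, hΩ, _, rfl⟩; exact hpos Ω hΩ)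

lemma wt_le (hpos : ∀ Ω : Set G, MemBP P Ω → 0 ≤ μ Ω) {p : G} {A : Set G}
    (hA : MemBP P A) (hpA : p ∈ A) : wt P μ p ≤ μ A :=
  csInf_le ⟨0, by rintro r ⟨Ω, hΩ, _, rfl⟩; exact hpos Ω hΩ⟩ ⟨A, hA, hpA, rfl⟩

end Main

/-- If `μ` is a finitely additive probability measure on `(P, B_P)` with `(μ(pP))_{p ∈ P}`
summable, then for every `Ω ∈ B_P`, `(w_p)_{p ∈ Ω}` is summable and `∑_{p ∈ Ω} w_p ≤ μ(Ω)`. -/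
theorem stmt7 {G : Type*} [Group G] (P : Submonoid G) (hQL : QuasiLatticeOrdered P)
    (μ : Set G → ℝ)
    (hpos : ∀ Ω : Set G, MemBP P Ω → 0 ≤ μ Ω)
    (hone : μ (P : Set G) = 1)
    (hadd : ∀ Ω₁ Ω₂ : Set G, MemBP P Ω₁ → MemBP P Ω₂ → Disjoint Ω₁ Ω₂ →
      μ (Ω₁ ∪ Ω₂) = μ Ω₁ + μ Ω₂)
    (hsum : Summable fun p : P => μ {x | QLe P (p : G) x}) :
    ∀ Ω : Set G, MemBP P Ω →
      (Summable fun p : Ω => wt P μ (p : G)) ∧ ∑' p : Ω, wt P μ (p : G) ≤ μ Ω := by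
  intro Ω hΩ
  classical
  have key : ∀ u : Finset Ω, ∑ x ∈ u, wt P μ (x : G) ≤ μ Ω := by
    intro u
    set F : Finset G := u.image Subtype.val with hF
    have hFΩ : ∀ q ∈ F, q ∈ Ω := by
      intro q hq
      rw [hF, Finset.mem_image] at hq
      obtain ⟨x, -, rfl⟩ := hq
      exact x.2
    have hFP : ∀ q ∈ F, q ∈ P := fun q hq => memBP_subset hΩ (hFΩ q hq)
    have heq : ∑ x ∈ u, wt P μ (x : G) = ∑ p ∈ F, wt P μ p := by
      rw [hF, Finset.sum_image (fun x _ y _ h => Subtype.ext h)]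
    rw [heq]
    have hstep : ∑ p ∈ F, wt P μ p ≤ ∑ p ∈ F, μ (sepSet P F p ∩ Ω) := by
      refine Finset.sum_le_sum fun p hp => ?_
      exact wt_le hpos (MemBP.inter _ _ (memBP_sep F (hFP p hp) hFP) hΩ)
        ⟨mem_sep F (hFP p hp), hFΩ p hp⟩
    refine hstep.trans ?_
    refine sum_mu_le hpos hadd F (fun p => sepSet P F p ∩ Ω) Ω hΩ
      (fun p hp => MemBP.inter _ _ (memBP_sep F (hFP p hp) hFP) hΩ)
      (fun p _ => Set.inter_subset_right)
      (fun p hp q hq hpq => ?_)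
    exact (sep_disjoint hQL F hp hq hpq).mono Set.inter_subset_left Set.inter_subset_left
  have hsummable : Summable fun p : Ω => wt P μ (p : G) :=
    summable_of_sum_le (fun x => wt_nonneg hpos _) key
  exact ⟨hsummable, Summable.tsum_le_of_sum_le hsummable key⟩
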